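/- arXiv:1703.07245 — 3 statements merged into one kernel-verified Lean document; each statement's English description precedes it below -/
import Mathlib

section
/- Let ν > 0, f > 0, and ξ(n) = n for all n (pure Stark case). Let j ∈ ℤ and ℓ₁ > 0 an integer, and S = {j, j+ℓ₁}. A normalized two-mode solution of (μ − ν d_n²) d_n = f n d_n with solution-set S exists if and only if ℓ₁ < ν/f, and in that case μ = ν/2 + (f/2)(2j + ℓ₁) and d_j² = 1/2 + (f ℓ₁)/(2ν), d_{j+ℓ₁}² = 1/2 − (f ℓ₁)/(2ν). -/
lemma two_mode_key (ν f : ℝ) (hν : 0 < ν) (hf : 0 < f) (j : ℤ) (ℓ₁ : ℤ)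
    (hℓ : 0 < ℓ₁) (μ : ℝ) (d : ℤ → ℝ)
    (hS : ∀ n : ℤ, d n ≠ 0 ↔ n ∈ ({j, j + ℓ₁} : Finset ℤ))
    (heq : ∀ n : ℤ, (μ - ν * (d n) ^ 2) * d n = f * (n : ℝ) * d n)
    (hsum : (∑ n ∈ ({j, j + ℓ₁} : Finset ℤ), (d n) ^ 2) = 1) :
    μ = ν / 2 + (f / 2) * (2 * (j : ℝ) + (ℓ₁ : ℝ)) ∧
    (d j) ^ 2 = 1 / 2 + f * (ℓ₁ : ℝ) / (2 * ν) ∧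
    (d (j + ℓ₁)) ^ 2 = 1 / 2 - f * (ℓ₁ : ℝ) / (2 * ν) := by
  have hjk : j ≠ j + ℓ₁ := by omega
  have hdj : d j ≠ 0 := (hS j).2 (by simp)
  have hdk : d (j + ℓ₁) ≠ 0 := (hS (j + ℓ₁)).2 (by simp)
  have h1 : μ - ν * (d j) ^ 2 = f * (j : ℝ) :=
    mul_right_cancel₀ hdj (heq j)
  have h2 : μ - ν * (d (j + ℓ₁)) ^ 2 = f * ((j : ℝ) + (ℓ₁ : ℝ)) := by
    have := mul_right_cancel₀ hdk (heq (j + ℓ₁))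
    push_cast at this
    linarith
  have hsum' : (d j) ^ 2 + (d (j + ℓ₁)) ^ 2 = 1 := by
    rwa [Finset.sum_pair hjk] at hsum
  have hν' : ν ≠ 0 := ne_of_gt hν
  constructor
  · field_simp
    nlinarith [h1, h2, hsum']
  constructor
  · field_simp
    nlinarith [h1, h2, hsum']
  · field_simp
    nlinarith [h1, h2, hsum']

/-- in the pure Stark case ξ(n) = n, a normalized two-mode solution
with solution-set S = {j, j+ℓ₁} exists iff ℓ₁ < ν/f, and in that case
μ = ν/2 + (f/2)(2j+ℓ₁), d_j² = 1/2 + fℓ₁/(2ν), d_{j+ℓ₁}² = 1/2 − fℓ₁/(2ν). -/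
theorem two_mode_solution_iff (ν f : ℝ) (hν : 0 < ν) (hf : 0 < f) (j : ℤ) (ℓ₁ : ℤ)
    (hℓ : 0 < ℓ₁) :
    ((∃ (μ : ℝ) (d : ℤ → ℝ),
        (∀ n : ℤ, d n ≠ 0 ↔ n ∈ ({j, j + ℓ₁} : Finset ℤ)) ∧
        (∀ n : ℤ, (μ - ν * (d n) ^ 2) * d n = f * (n : ℝ) * d n) ∧
        (∑ n ∈ ({j, j + ℓ₁} : Finset ℤ), (d n) ^ 2) = 1) ↔ (ℓ₁ : ℝ) < ν / f) ∧
    (∀ (μ : ℝ) (d : ℤ → ℝ),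
        (∀ n : ℤ, d n ≠ 0 ↔ n ∈ ({j, j + ℓ₁} : Finset ℤ)) →
        (∀ n : ℤ, (μ - ν * (d n) ^ 2) * d n = f * (n : ℝ) * d n) →
        (∑ n ∈ ({j, j + ℓ₁} : Finset ℤ), (d n) ^ 2) = 1 →
        μ = ν / 2 + (f / 2) * (2 * (j : ℝ) + (ℓ₁ : ℝ)) ∧
        (d j) ^ 2 = 1 / 2 + f * (ℓ₁ : ℝ) / (2 * ν) ∧
        (d (j + ℓ₁)) ^ 2 = 1 / 2 - f * (ℓ₁ : ℝ) / (2 * ν)) := by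
  have hjk : j ≠ j + ℓ₁ := by omega
  have hℓR : (0 : ℝ) < (ℓ₁ : ℝ) := by exact_mod_cast hℓ
  refine ⟨⟨?_, ?_⟩, fun μ d hS heq hsum => two_mode_key ν f hν hf j ℓ₁ hℓ μ d hS heq hsum⟩
  · rintro ⟨μ, d, hS, heq, hsum⟩
    obtain ⟨-, -, hk⟩ := two_mode_key ν f hν hf j ℓ₁ hℓ μ d hS heq hsum
    have hdk : d (j + ℓ₁) ≠ 0 := (hS (j + ℓ₁)).2 (by simp)
    have hpos : 0 < (d (j + ℓ₁)) ^ 2 := pow_two_pos_of_ne_zero hdk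
    rw [hk] at hpos
    have h' : f * (ℓ₁ : ℝ) / (2 * ν) < 1 / 2 := by linarith
    rw [div_lt_iff₀ (by linarith : (0:ℝ) < 2 * ν)] at h'
    rw [lt_div_iff₀ hf]
    nlinarith
  · intro hlt
    have hfl : f * (ℓ₁ : ℝ) < ν := by
      rw [lt_div_iff₀ hf] at hlt; linarith
    set a : ℝ := 1 / 2 + f * (ℓ₁ : ℝ) / (2 * ν) with ha
    set b : ℝ := 1 / 2 - f * (ℓ₁ : ℝ) / (2 * ν) with hb
    have hapos : 0 < a := by rw [ha]; positivity
    have hbpos : 0 < b := by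
      rw [hb]
      have : f * (ℓ₁ : ℝ) / (2 * ν) < 1 / 2 := by
        rw [div_lt_iff₀ (by linarith : (0:ℝ) < 2 * ν)]; linarith
      linarith
    refine ⟨ν / 2 + (f / 2) * (2 * (j : ℝ) + (ℓ₁ : ℝ)),
      fun n => if n = j then Real.sqrt a else if n = j + ℓ₁ then Real.sqrt b else 0,
      ?_, ?_, ?_⟩
    · intro n
      simp only [Finset.mem_insert, Finset.mem_singleton]
      split_ifs with h1 h2
      · simp [h1, Real.sqrt_ne_zero'.mpr hapos]
      · simp [h2, Real.sqrt_ne_zero'.mpr hbpos]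
      · simp [h1, h2]
    · intro n
      dsimp only
      split_ifs with h1 h2
      · rw [h1, Real.sq_sqrt hapos.le]
        have hν' : ν ≠ 0 := ne_of_gt hν
        have : ν / 2 + f / 2 * (2 * (j:ℝ) + (ℓ₁:ℝ)) - ν * a = f * (j:ℝ) := by
          rw [ha]; field_simp; ring
        rw [this]
      · rw [h2, Real.sq_sqrt hbpos.le]
        have hν' : ν ≠ 0 := ne_of_gt hν
        have : ν / 2 + f / 2 * (2 * (j:ℝ) + (ℓ₁:ℝ)) - ν * b = f * ((j:ℝ) + (ℓ₁:ℝ)) := by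
          rw [hb]; field_simp; ring
        rw [this]; push_cast; ring
      · ring
    · rw [Finset.sum_pair hjk]
      dsimp only
      rw [if_pos rfl, if_neg (Ne.symm hjk), if_pos rfl]
      rw [Real.sq_sqrt hapos.le, Real.sq_sqrt hbpos.le, ha, hb]
      ring
end

section
/- With ξ(n) = n, ν > 0, f > 0, the number of solution-sets S ⊂ ℕ with min S = 0 and |S| ≥ 2 satisfying ν/f > Σ_{ℓ∈S}(max S − ℓ) equals M(ν/f) = Σ_{0 < n < ν/f} Q(n), where Q(n) is the number of partitions of n into distinct positive parts. -/
open Finset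

private def gfun (S : Finset ℕ) : ℕ := ∑ ℓ ∈ S, (S.sup id - ℓ)

private lemma gfun_cast (S : Finset ℕ) :
    ∑ ℓ ∈ S, (((S.sup id : ℕ) : ℝ) - (ℓ : ℝ)) = (gfun S : ℝ) := by
  rw [gfun, Nat.cast_sum]
  refine Finset.sum_congr rfl fun ℓ hℓ => ?_
  exact (Nat.cast_sub (Finset.le_sup (f := id) hℓ)).symm

private lemma sup_le_gfun {S : Finset ℕ} (h0 : 0 ∈ S) : S.sup id ≤ gfun S := by
  have := Finset.single_le_sum (f := fun ℓ => S.sup id - ℓ)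
    (fun i _ => Nat.zero_le _) h0
  simpa [gfun] using this

private lemma one_le_sup {S : Finset ℕ} (h0 : 0 ∈ S) (h2 : 2 ≤ S.card) :
    1 ≤ S.sup id := by
  obtain ⟨b, hb, hb0⟩ := Finset.exists_mem_ne (s := S) (by omega) 0
  have := Finset.le_sup (f := id) hb
  simp only [id] at this
  omega

/-- The fiber over `n` of the solution-set counting problem has the same cardinality
as the set of finsets of distinct positive integers summing to `n`. -/
private lemma fiber_card (N n : ℕ) (h1 : 1 ≤ n) (hN : n < N) :
    ((Finset.range N).powerset.filter
        (fun S => (0 ∈ S ∧ 2 ≤ S.card ∧ gfun S < N) ∧ gfun S = n)).card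
    = ((Finset.range N).powerset.filter (fun T => 0 ∉ T ∧ ∑ t ∈ T, t = n)).card := by
  -- facts about the forward map
  have fwd : ∀ S : Finset ℕ, 0 ∈ S → 2 ≤ S.card →
      ((S.erase (S.sup id)).image (fun ℓ => S.sup id - ℓ)).sup id = S.sup id ∧
      0 ∉ (S.erase (S.sup id)).image (fun ℓ => S.sup id - ℓ) ∧
      ∑ t ∈ (S.erase (S.sup id)).image (fun ℓ => S.sup id - ℓ), t = gfun S := by
    intro S h0 h2
    set m := S.sup id with hm
    have hm1 : 1 ≤ m := one_le_sup h0 h2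
    have hle : ∀ ℓ ∈ S, ℓ ≤ m := fun ℓ hℓ => Finset.le_sup (f := id) hℓ
    have h0e : (0 : ℕ) ∈ S.erase m := Finset.mem_erase.mpr ⟨by omega, h0⟩
    have hinj : ∀ x ∈ S.erase m, ∀ y ∈ S.erase m,
        m - x = m - y → x = y := by
      intro x hx y hy h
      have := hle x (Finset.mem_of_mem_erase hx)
      have := hle y (Finset.mem_of_mem_erase hy)
      omega
    refine ⟨?_, ?_, ?_⟩
    · apply le_antisymm
      · apply Finset.sup_le
        intro x hx
        obtain ⟨ℓ, _, rfl⟩ := Finset.mem_image.mp hx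
        simp only [id]; omega
      · have : m ∈ (S.erase m).image (fun ℓ => m - ℓ) :=
          Finset.mem_image.mpr ⟨0, h0e, by omega⟩
        exact Finset.le_sup (f := id) this
    · intro h
      obtain ⟨ℓ, hℓ, hℓ0⟩ := Finset.mem_image.mp h
      have h1 := hle ℓ (Finset.mem_of_mem_erase hℓ)
      have h2 := (Finset.mem_erase.mp hℓ).1
      omega
    · rw [Finset.sum_image hinj, gfun]
      exact Finset.sum_erase _ (by omega)
  -- facts about the backward map
  have bwd : ∀ T : Finset ℕ, 0 ∉ T → ∑ t ∈ T, t = n →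
      (insert (T.sup id) (T.image (fun t => T.sup id - t))).sup id = T.sup id ∧
      T.sup id ∉ T.image (fun t => T.sup id - t) ∧
      T.sup id ∈ T ∧
      gfun (insert (T.sup id) (T.image (fun t => T.sup id - t))) = ∑ t ∈ T, t := by
    intro T h0T hsum
    have hTne : T.Nonempty := by
      rcases Finset.eq_empty_or_nonempty T with h | h
      · subst h; simp at hsum; omega
      · exact h
    set m := T.sup id with hm
    obtain ⟨b, hb, hbm⟩ := Finset.exists_mem_eq_sup T hTne id
    have hmT : m ∈ T := by rw [hm, hbm]; exact hb
    have hle : ∀ t ∈ T, t ≤ m := fun t ht => Finset.le_sup (f := id) ht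
    have hpos : ∀ t ∈ T, 1 ≤ t := by
      intro t ht
      rcases Nat.eq_zero_or_pos t with h | h
      · exact absurd (h ▸ ht) h0T
      · exact h
    have hm1 : 1 ≤ m := le_trans (hpos m hmT) le_rfl
    have hnotmem : m ∉ T.image (fun t => m - t) := by
      intro h
      obtain ⟨t, ht, htm⟩ := Finset.mem_image.mp h
      have := hle t ht; have := hpos t ht; omega
    have hsup : (insert m (T.image (fun t => m - t))).sup id = m := by
      apply le_antisymm
      · apply Finset.sup_le
        intro x hx
        rcases Finset.mem_insert.mp hx with h | h
        · simp [h]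
        · obtain ⟨t, _, rfl⟩ := Finset.mem_image.mp h
          simp only [id]; omega
      · exact Finset.le_sup (f := id) (Finset.mem_insert_self _ _)
    refine ⟨hsup, hnotmem, hmT, ?_⟩
    have hinj : ∀ x ∈ T, ∀ y ∈ T, m - x = m - y → x = y := by
      intro x hx y hy h
      have := hle x hx; have := hle y hy; omega
    rw [gfun, hsup, Finset.sum_insert hnotmem, Finset.sum_image hinj]
    have : ∀ t ∈ T, m - (m - t) = t := by
      intro t ht; have := hle t ht; omega
    rw [Finset.sum_congr rfl this]
    omega
  refine Finset.card_bij'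
    (fun S _ => (S.erase (S.sup id)).image (fun ℓ => S.sup id - ℓ))
    (fun T _ => insert (T.sup id) (T.image (fun t => T.sup id - t)))
    ?_ ?_ ?_ ?_
  · intro S hS
    rw [Finset.mem_filter, Finset.mem_powerset] at hS
    obtain ⟨hSr, ⟨h0, h2, hgN⟩, hgn⟩ := hS
    obtain ⟨hsup, h0T, hsumT⟩ := fwd S h0 h2
    rw [Finset.mem_filter, Finset.mem_powerset]
    refine ⟨?_, h0T, by rw [hsumT, hgn]⟩
    intro x hx
    obtain ⟨ℓ, _, rfl⟩ := Finset.mem_image.mp hx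
    have := sup_le_gfun h0
    rw [Finset.mem_range]
    omega
  · intro T hT
    rw [Finset.mem_filter, Finset.mem_powerset] at hT
    obtain ⟨hTr, h0T, hsum⟩ := hT
    obtain ⟨hsup, hnotmem, hmT, hg⟩ := bwd T h0T hsum
    rw [Finset.mem_filter, Finset.mem_powerset]
    have hmn : T.sup id ≤ n := by
      rw [← hsum]
      exact Finset.single_le_sum (f := id) (fun i _ => Nat.zero_le _) hmT
    have hgn : gfun (insert (T.sup id) (T.image (fun t => T.sup id - t))) = n := by
      rw [hg, hsum]
    have hcard : 2 ≤ (insert (T.sup id) (T.image (fun t => T.sup id - t))).card := by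
      rw [Finset.card_insert_of_notMem hnotmem]
      have : 0 < (T.image (fun t => T.sup id - t)).card :=
        Finset.card_pos.mpr ⟨T.sup id - T.sup id, Finset.mem_image.mpr ⟨T.sup id, hmT, rfl⟩⟩
      omega
    refine ⟨?_, ⟨?_, hcard, by exact lt_of_eq_of_lt hgn hN⟩, hgn⟩
    · intro x hx
      rw [Finset.mem_range]
      have hxm : x ≤ T.sup id := by
        have := Finset.le_sup (f := id) hx
        rw [hsup] at this
        exact this
      omega
    · exact Finset.mem_insert.mpr (Or.inr
        (Finset.mem_image.mpr ⟨T.sup id, hmT, by omega⟩))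
  · intro S hS
    rw [Finset.mem_filter, Finset.mem_powerset] at hS
    obtain ⟨hSr, ⟨h0, h2, hgN⟩, hgn⟩ := hS
    obtain ⟨hsup, h0T, hsumT⟩ := fwd S h0 h2
    set m := S.sup id with hm
    have hmS : m ∈ S := by
      obtain ⟨b, hb, hbm⟩ := Finset.exists_mem_eq_sup S ⟨0, h0⟩ id
      rw [hm, hbm]; exact hb
    have hle : ∀ ℓ ∈ S, ℓ ≤ m := fun ℓ hℓ => Finset.le_sup (f := id) hℓ
    simp only [hsup]
    rw [Finset.image_image]
    have : (S.erase m).image ((fun t => m - t) ∘ fun ℓ => m - ℓ) = S.erase m := by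
      rw [show ((fun t => m - t) ∘ fun ℓ => m - ℓ) = fun ℓ => m - (m - ℓ) from rfl]
      apply Finset.image_congr (g := id) ?_ |>.trans (Finset.image_id)
      intro ℓ hℓ
      have := hle ℓ (Finset.mem_of_mem_erase hℓ)
      simp only [id]; omega
    rw [this, Finset.insert_erase hmS]
  · intro T hT
    rw [Finset.mem_filter, Finset.mem_powerset] at hT
    obtain ⟨hTr, h0T, hsum⟩ := hT
    obtain ⟨hsup, hnotmem, hmT, hg⟩ := bwd T h0T hsum
    set m := T.sup id with hm
    have hle : ∀ t ∈ T, t ≤ m := fun t ht => Finset.le_sup (f := id) ht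
    simp only [hsup]
    rw [Finset.erase_insert hnotmem, Finset.image_image]
    rw [show ((fun ℓ => m - ℓ) ∘ fun t => m - t) = fun t => m - (m - t) from rfl]
    apply Finset.image_congr (g := id) ?_ |>.trans (Finset.image_id)
    intro t ht
    have := hle t ht
    simp only [id]; omega

/-- Finsets of distinct positive integers summing to `n` (inside `range N`, `n < N`)
are counted by partitions of `n` into distinct parts. -/
private lemma distincts_card (N n : ℕ) (hN : n < N) :
    ((Finset.range N).powerset.filter (fun T => 0 ∉ T ∧ ∑ t ∈ T, t = n)).card
    = (Nat.Partition.distincts n).card := by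
  refine Finset.card_bij'
    (fun T hT => ⟨T.val, ?_, ?_⟩)
    (fun p _ => p.parts.toFinset) ?_ ?_ ?_ ?_
  · rw [Finset.mem_filter] at hT
    intro i hi
    rcases Nat.eq_zero_or_pos i with h | h
    · exact absurd (h ▸ hi) hT.2.1
    · exact h
  · rw [Finset.mem_filter] at hT
    have := hT.2.2
    rwa [Finset.sum, Multiset.map_id'] at this
  · intro T hT
    simp only [Nat.Partition.distincts, Finset.mem_filter, Finset.mem_univ, true_and]
    exact T.nodup
  · intro p hp
    simp only [Nat.Partition.distincts, Finset.mem_filter, Finset.mem_univ, true_and] at hp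
    rw [Finset.mem_filter, Finset.mem_powerset]
    refine ⟨?_, ?_, ?_⟩
    · intro x hx
      rw [Multiset.mem_toFinset] at hx
      have hle : x ≤ p.parts.sum := Multiset.single_le_sum (fun y _ => Nat.zero_le _) _ hx
      rw [p.parts_sum] at hle
      rw [Finset.mem_range]; omega
    · intro h
      rw [Multiset.mem_toFinset] at h
      exact absurd (p.parts_pos h) (by omega)
    · have : p.parts.toFinset.val = p.parts := by
        rw [Multiset.toFinset_val, hp.dedup]
      simp only [Finset.sum, this, Multiset.map_id', p.parts_sum]
  · intro T hT
    exact Finset.val_toFinset T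
  · intro p hp
    simp only [Nat.Partition.distincts, Finset.mem_filter, Finset.mem_univ, true_and] at hp
    ext1
    show p.parts.toFinset.val = p.parts
    rw [Multiset.toFinset_val, hp.dedup]

/-- the number of solution-sets S ⊂ ℕ with min S = 0 and |S| ≥ 2
satisfying ν/f > Σ_{ℓ∈S}(max S − ℓ) equals M(ν/f) = Σ_{0 < n < ν/f} Q(n),
where Q(n) is the number of partitions of n into distinct positive parts. -/
theorem counting_solution_sets (ν f : ℝ) (hν : 0 < ν) (hf : 0 < f) :
    Set.ncard {S : Finset ℕ | 0 ∈ S ∧ 2 ≤ S.card ∧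
        (∑ ℓ ∈ S, (((S.sup id : ℕ) : ℝ) - (ℓ : ℝ))) < ν / f}
      = ∑ n ∈ Finset.Ico 1 ⌈ν / f⌉₊, (Nat.Partition.distincts n).card := by
  set N := ⌈ν / f⌉₊ with hN
  have hsetEq : {S : Finset ℕ | 0 ∈ S ∧ 2 ≤ S.card ∧
        (∑ ℓ ∈ S, (((S.sup id : ℕ) : ℝ) - (ℓ : ℝ))) < ν / f}
      = ↑((Finset.range N).powerset.filter
          (fun S => 0 ∈ S ∧ 2 ≤ S.card ∧ gfun S < N)) := by
    ext S
    simp only [Set.mem_setOf_eq, Finset.coe_filter, Finset.mem_powerset,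
      Set.mem_setOf_eq]
    rw [gfun_cast]
    rw [show ((gfun S : ℝ) < ν / f) ↔ gfun S < N from (Nat.lt_ceil).symm]
    constructor
    · rintro ⟨h0, h2, hg⟩
      refine ⟨?_, h0, h2, hg⟩
      intro ℓ hℓ
      have h1 : ℓ ≤ S.sup id := Finset.le_sup (f := id) hℓ
      have h2' := sup_le_gfun h0
      rw [Finset.mem_range]; omega
    · rintro ⟨_, h0, h2, hg⟩
      exact ⟨h0, h2, hg⟩
  rw [hsetEq, Set.ncard_coe_finset]
  rw [Finset.card_eq_sum_card_fiberwise (f := gfun) (t := Finset.Ico 1 N) ?_]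
  · refine Finset.sum_congr rfl fun n hn => ?_
    rw [Finset.mem_Ico] at hn
    rw [Finset.filter_filter]
    rw [fiber_card N n hn.1 hn.2, distincts_card N n hn.2]
  · intro S hS
    rw [Finset.mem_coe, Finset.mem_filter] at hS
    obtain ⟨_, h0, h2, hg⟩ := hS
    rw [Finset.mem_coe, Finset.mem_Ico]
    have := one_le_sup h0 h2
    have := sup_le_gfun h0
    omega
end

section
/- Let ν > 0, f > 0 with ξ(n) = n, and let S = {j, j+1, …, j+N−1} be a block of N consecutive integers. Then S is a solution-set of the anticontinuous limit equation (i.e., μ^S − f n > 0 for all n ∈ S, where μ^S = ν/N + f j + f(N−1)/2) if and only if N(N−1)/2 < ν/f. -/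
/-- a block S = {j, …, j+N−1} of N consecutive integers is a
solution-set (μ^S − f n > 0 for all n ∈ S, μ^S = ν/N + f j + f(N−1)/2)
iff N(N−1)/2 < ν/f. -/
theorem consecutive_block_solution_set_iff (ν f : ℝ) (hν : 0 < ν) (hf : 0 < f)
    (j : ℤ) (N : ℕ) (hN : 1 ≤ N) :
    let μ : ℝ := ν / N + f * (j : ℝ) + f * ((N : ℝ) - 1) / 2
    (∀ n ∈ Finset.Ico j (j + N), 0 < μ - f * (n : ℝ)) ↔
      (N : ℝ) * ((N : ℝ) - 1) / 2 < ν / f := by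
  intro μ
  have hNpos : (0:ℝ) < (N:ℝ) := by exact_mod_cast hN
  constructor
  · intro h
    have hmem : j + (N:ℤ) - 1 ∈ Finset.Ico j (j + N) := by
      simp only [Finset.mem_Ico]
      omega
    have := h _ hmem
    have hcast : ((j + (N:ℤ) - 1 : ℤ) : ℝ) = (j:ℝ) + (N:ℝ) - 1 := by push_cast; ring
    rw [hcast] at this
    have key : f * ((N:ℝ) - 1) / 2 < ν / N := by simp only [μ] at this; linarith
    rw [div_lt_div_iff₀ (by norm_num) hNpos] at key
    rw [lt_div_iff₀ hf]
    nlinarith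
  · intro h n hn
    simp only [Finset.mem_Ico] at hn
    have hn' : (n:ℝ) ≤ (j:ℝ) + (N:ℝ) - 1 := by
      have h1 : n ≤ j + (N:ℤ) - 1 := by omega
      have h2 : ((n:ℤ):ℝ) ≤ ((j + (N:ℤ) - 1 : ℤ):ℝ) := by exact_mod_cast h1
      push_cast at h2
      linarith
    rw [lt_div_iff₀ hf] at h
    have key : f * ((N:ℝ) - 1) / 2 < ν / N := by
      rw [div_lt_div_iff₀ (by norm_num) hNpos]
      nlinarith
    have : f * (n:ℝ) ≤ f * ((j:ℝ) + (N:ℝ) - 1) := by nlinarith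
    simp only [μ]
    nlinarith
end
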